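/- arXiv:1110.2197 — 4 statements merged into one kernel-verified Lean document; each statement's English description precedes it below -/
import Mathlib

section
/- Let F ∈ ℂ[x₀,…,xₙ] be homogeneous of degree d and write F = x₀^e · H where H is homogeneous of degree d − e ≥ 1 and x₀ does not divide H. If G ∈ ℂ[y₀,…,yₙ] is homogeneous of degree d − e and G(∂/∂x₀,…,∂/∂xₙ)(x₀^{d-e}·H) = 0, then G(∂/∂x₀,…,∂/∂xₙ)(x₀^{d-e}) = 0. -/
open MvPolynomial

noncomputable def diffOpMonomial {m : ℕ} (α : Fin m →₀ ℕ) :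
    MvPolynomial (Fin m) ℂ →ₗ[ℂ] MvPolynomial (Fin m) ℂ :=
  ((List.finRange m).map fun i =>
    ((pderiv (R := ℂ) i).toLinearMap) ^ (α i)).prod

noncomputable def diffAct {m : ℕ} :
    MvPolynomial (Fin m) ℂ →ₗ[ℂ] (MvPolynomial (Fin m) ℂ →ₗ[ℂ] MvPolynomial (Fin m) ℂ) :=
  (MvPolynomial.basisMonomials (Fin m) ℂ).constr ℂ diffOpMonomial

noncomputable def DiffSpan {m : ℕ} (f : MvPolynomial (Fin m) ℂ) :
    Submodule ℂ (MvPolynomial (Fin m) ℂ) :=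
  Submodule.span ℂ (Set.range fun α : Fin m →₀ ℕ => diffOpMonomial α f)

/-- The annihilator `f^⊥` of a polynomial `f`, as a `ℂ`-subspace of the ring of
differential operators (it is in fact an ideal). -/
noncomputable def perp {m : ℕ} (f : MvPolynomial (Fin m) ℂ) :
    Submodule ℂ (MvPolynomial (Fin m) ℂ) :=
  LinearMap.ker (diffAct.flip f)

/-- An ideal `I` is apolar to `F` if `I ⊆ F^⊥`, i.e. every `D ∈ I` annihilates `F`. -/
def IsApolarTo {m : ℕ} (I : Ideal (MvPolynomial (Fin m) ℂ))
    (F : MvPolynomial (Fin m) ℂ) : Prop :=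
  ∀ D ∈ I, diffAct D F = 0

/-- A homogeneous ideal is saturated (with respect to the irrelevant maximal ideal). -/
def IsSaturatedIdeal {m : ℕ} (I : Ideal (MvPolynomial (Fin m) ℂ)) : Prop :=
  ∀ g : MvPolynomial (Fin m) ℂ, (∀ i : Fin m, X i * g ∈ I) → g ∈ I

/-- The Hilbert function of `T/I` in degree `e`: `dim_ℂ (T/I)_e = dim T_e − dim I_e`. -/
noncomputable def hilb {m : ℕ} (I : Ideal (MvPolynomial (Fin m) ℂ)) (e : ℕ) : ℕ :=
  Module.finrank ℂ (homogeneousSubmodule (Fin m) ℂ e) -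
    Module.finrank ℂ
      (Submodule.restrictScalars ℂ I ⊓ homogeneousSubmodule (Fin m) ℂ e :
        Submodule ℂ (MvPolynomial (Fin m) ℂ))

/-- `I` defines a zero-dimensional subscheme of length `r`: it is homogeneous,
saturated, and `dim_ℂ (T/I)_e = r` for all sufficiently large `e`. -/
def DefinesLength {m : ℕ} (I : Ideal (MvPolynomial (Fin m) ℂ)) (r : ℕ) : Prop :=
  (∀ g ∈ I, ∀ j : ℕ, homogeneousComponent j g ∈ I) ∧
  IsSaturatedIdeal I ∧
  ∃ e₀ : ℕ, ∀ e ≥ e₀, hilb I e = r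

/-- The cactus rank of `F`: the minimal length of an apolar zero-dimensional subscheme. -/
noncomputable def cactusRank {m : ℕ} (F : MvPolynomial (Fin m) ℂ) : ℕ :=
  sInf {r : ℕ | ∃ I : Ideal (MvPolynomial (Fin m) ℂ), IsApolarTo I F ∧ DefinesLength I r}

/-- Dehomogenization with respect to `x₀`: `f = F(1, x₁, …, xₙ)`. -/
noncomputable def dehom {n : ℕ} (F : MvPolynomial (Fin (n + 1)) ℂ) :
    MvPolynomial (Fin n) ℂ :=
  aeval (fun i : Fin (n + 1) =>
    Fin.cases (motive := fun _ => MvPolynomial (Fin n) ℂ) 1 (fun j => X j) i) F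

/-- Homogenization with respect to a new variable `y₀`. -/
noncomputable def homogenize {n : ℕ} (g : MvPolynomial (Fin n) ℂ) :
    MvPolynomial (Fin (n + 1)) ℂ :=
  ∑ j ∈ Finset.range (g.totalDegree + 1),
    (X 0 : MvPolynomial (Fin (n + 1)) ℂ) ^ (g.totalDegree - j) *
      rename Fin.succ (homogeneousComponent j g)

/-- `N_d`: `2·C(n+k,k)` if `d = 2k+1`, and `C(n+k,k) + C(n+k+1,k+1)` if `d = 2k+2`. -/
def Nd (n d : ℕ) : ℕ :=
  if d % 2 = 1 then 2 * Nat.choose (n + d / 2) (d / 2)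
  else Nat.choose (n + d / 2 - 1) (d / 2 - 1) + Nat.choose (n + d / 2) (d / 2)

lemma coeff_pderiv'' {m : ℕ} (i : Fin m) (γ : Fin m →₀ ℕ) (p : MvPolynomial (Fin m) ℂ) :
    coeff γ (pderiv i p) = ((γ i : ℂ) + 1) * coeff (γ + Finsupp.single i 1) p := by
  induction p using MvPolynomial.induction_on' with
  | monomial s a =>
    rw [pderiv_monomial, coeff_monomial, coeff_monomial]
    by_cases h : s = γ + Finsupp.single i 1
    · subst h
      rw [if_pos (by rw [add_tsub_cancel_right]), if_pos rfl]
      simp [mul_comm]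
    · rw [if_neg h, mul_zero]
      by_cases h2 : s - Finsupp.single i 1 = γ
      · rw [if_pos h2]
        by_cases h3 : s i = 0
        · simp [h3]
        · exfalso
          apply h
          rw [← h2, tsub_add_cancel_of_le]
          rwa [Finsupp.single_le_iff, Nat.one_le_iff_ne_zero]
      · rw [if_neg h2]
  | add p q hp hq => simp [hp, hq, mul_add]

lemma coeff_pderiv_pow {m : ℕ} (i : Fin m) (t : ℕ) (γ : Fin m →₀ ℕ)
    (p : MvPolynomial (Fin m) ℂ) :
    coeff γ ((((pderiv (R := ℂ) i).toLinearMap) ^ t) p)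
      = ((γ i + 1).ascFactorial t : ℂ) * coeff (γ + Finsupp.single i t) p := by
  induction t generalizing p with
  | zero => simp
  | succ t ih =>
    rw [pow_succ, Module.End.mul_apply]
    have : (pderiv (R := ℂ) i).toLinearMap p = pderiv i p := rfl
    rw [this, ih, coeff_pderiv'', Nat.ascFactorial_succ]
    have h1 : (γ + Finsupp.single i t) i = γ i + t := by simp
    rw [h1]
    have h2 : γ + Finsupp.single i t + Finsupp.single i 1 = γ + Finsupp.single i (t + 1) := by
      rw [add_assoc, ← Finsupp.single_add]
    rw [h2]
    push_cast
    ring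

lemma coeff_prod_pderiv {m : ℕ} (β : Fin m →₀ ℕ) (l : List (Fin m)) (hl : l.Nodup)
    (γ : Fin m →₀ ℕ) (p : MvPolynomial (Fin m) ℂ) :
    coeff γ (((l.map fun i => ((pderiv (R := ℂ) i).toLinearMap) ^ (β i)).prod) p)
      = ((l.map fun i => (γ i + 1).ascFactorial (β i)).prod : ℂ) *
        coeff (γ + (l.map fun i => Finsupp.single i (β i)).sum) p := by
  induction l generalizing γ with
  | nil => simp
  | cons a l ih =>
    rw [List.map_cons, List.prod_cons, Module.End.mul_apply, coeff_pderiv_pow,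
      ih (List.nodup_cons.mp hl).2 _]
    have hmap : (l.map fun i => ((γ + Finsupp.single a (β a)) i + 1).ascFactorial (β i))
        = l.map fun i => (γ i + 1).ascFactorial (β i) := by
      apply List.map_congr_left
      intro i hi
      have : (γ + Finsupp.single a (β a)) i = γ i := by
        have hne : a ≠ i := fun h => (List.nodup_cons.mp hl).1 (h ▸ hi)
        simp [Finsupp.single_apply, hne]
      rw [this]
    rw [hmap, List.map_cons, List.prod_cons, List.map_cons, List.sum_cons,
      Nat.cast_mul, mul_assoc, ← add_assoc]

lemma coeff_diffOpMonomial {m : ℕ} (β γ : Fin m →₀ ℕ) (p : MvPolynomial (Fin m) ℂ) :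
    coeff γ (diffOpMonomial β p)
      = ((∏ i : Fin m, (γ i + 1).ascFactorial (β i) : ℕ) : ℂ) * coeff (γ + β) p := by
  rw [diffOpMonomial, coeff_prod_pderiv β _ (List.nodup_finRange m), ← Fin.prod_univ_def,
    ← Fin.sum_univ_def, Finsupp.univ_sum_single]

lemma diffAct_apply' {m : ℕ} (p q : MvPolynomial (Fin m) ℂ) :
    diffAct p q = ∑ β ∈ p.support, coeff β p • diffOpMonomial β q := by
  conv_lhs => rw [p.as_sum]
  rw [map_sum, LinearMap.sum_apply]
  apply Finset.sum_congr rfl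
  intro β _
  have h1 : (monomial β) (coeff β p) = coeff β p • (basisMonomials (Fin m) ℂ) β := by
    rw [coe_basisMonomials]
    simp [smul_monomial]
  rw [h1, map_smul]
  have h2 : diffAct ((basisMonomials (Fin m) ℂ) β) = diffOpMonomial β := by
    exact Module.Basis.constr_basis (basisMonomials (Fin m) ℂ) ℂ diffOpMonomial β
  rw [h2]
  rfl

lemma coeff_diffAct {m : ℕ} (p q : MvPolynomial (Fin m) ℂ) (γ : Fin m →₀ ℕ) :
    coeff γ (diffAct p q) = ∑ β ∈ p.support,
      coeff β p * (((∏ i, (γ i + 1).ascFactorial (β i) : ℕ) : ℂ) * coeff (γ + β) q) := by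
  rw [diffAct_apply', coeff_sum]
  apply Finset.sum_congr rfl
  intro β _
  rw [coeff_smul, coeff_diffOpMonomial, smul_eq_mul]

lemma support_degree {m k : ℕ} {G : MvPolynomial (Fin m) ℂ} (h : G.IsHomogeneous k)
    {β : Fin m →₀ ℕ} (hβ : β ∈ G.support) : ∑ i, β i = k := by
  have h1 := h (mem_support_iff.mp hβ)
  rw [← h1, show (Finsupp.weight 1 : (Fin m →₀ ℕ) →+ ℕ) = Finsupp.weight (fun _ => 1) from rfl,
    ← Finsupp.degree_eq_weight_one, Finsupp.degree_apply]
  exact (Finset.sum_subset (Finset.subset_univ _)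
    (fun i _ hi => Finsupp.notMem_support_iff.mp hi)).symm

lemma eq_single_zero {n k : ℕ} {β : Fin (n+1) →₀ ℕ} (hsum : ∑ i, β i = k)
    (hz : ∀ i : Fin (n+1), i ≠ 0 → β i = 0) : β = Finsupp.single 0 k := by
  have h0 : β 0 = k := by
    rw [← hsum, ← Finset.add_sum_erase Finset.univ _ (Finset.mem_univ 0),
      Finset.sum_eq_zero (fun i hi => hz i (Finset.ne_of_mem_erase hi)), add_zero]
  ext i
  rcases eq_or_ne i 0 with rfl | h
  · simp [h0]
  · rw [hz i h, Finsupp.single_apply, if_neg (fun hc => h hc.symm)]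

lemma key {n k : ℕ} (H G : MvPolynomial (Fin (n+1)) ℂ) (hGhom : G.IsHomogeneous k)
    (γ : Fin (n+1) →₀ ℕ) (hγ0 : γ 0 = 0) (hγ : γ ∈ H.support)
    (hann : diffAct G ((X 0 : MvPolynomial (Fin (n+1)) ℂ) ^ k * H) = 0) :
    coeff (Finsupp.single 0 k) G = 0 := by
  have h := congrArg (coeff γ) hann
  rw [coeff_diffAct, coeff_zero, X_pow_eq_monomial] at h
  rw [Finset.sum_eq_single (Finsupp.single 0 k)] at h
  · by_cases hmem : Finsupp.single 0 k ∈ G.support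
    swap
    · exact MvPolynomial.notMem_support_iff.mp hmem
    rw [add_comm γ, coeff_monomial_mul, one_mul] at h
    have hfac : (∏ i, (γ i + 1).ascFactorial (Finsupp.single 0 k i)) = k.factorial := by
      rw [Finset.prod_eq_single 0]
      · rw [hγ0, Finsupp.single_eq_same, Nat.one_ascFactorial]
      · intro i _ hi
        rw [Finsupp.single_eq_of_ne' (fun hc => hi hc.symm), Nat.ascFactorial_zero]
      · simp
    rw [hfac] at h
    have hk : ((k.factorial : ℂ)) ≠ 0 := Nat.cast_ne_zero.mpr k.factorial_ne_zero
    have hγne : coeff γ H ≠ 0 := mem_support_iff.mp hγ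
    rcases mul_eq_zero.mp h with h' | h'
    · exact h'
    · exact absurd h' (mul_ne_zero hk hγne)
  · intro β hβ hne
    have hsum := support_degree hGhom hβ
    rw [coeff_monomial_mul', if_neg, mul_zero, mul_zero]
    intro hle
    apply hne
    apply eq_single_zero hsum
    intro i hi
    by_contra hbz
    have hb0 : k ≤ β 0 := by
      have := hle 0
      rwa [Finsupp.single_eq_same, Finsupp.add_apply, hγ0, zero_add] at this
    have : k < ∑ j, β j := by
      calc k < β 0 + β i := by omega
        _ ≤ ∑ j, β j := by
          have : ({0, i} : Finset (Fin (n+1))).sum β ≤ ∑ j, β j :=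
            Finset.sum_le_sum_of_subset (Finset.subset_univ _)
          rwa [Finset.sum_pair (fun hc => hi hc.symm)] at this
    omega
  · intro hmem
    rw [MvPolynomial.notMem_support_iff.mp hmem, zero_mul]


/-- Remark 2 of the paper. If `F = x₀^e·H` is homogeneous of degree `d`
with `H` homogeneous of degree `d − e ≥ 1` not divisible by `x₀`, and `G` is homogeneous
of degree `d − e` with `G(∂)(x₀^{d-e}·H) = 0`, then `G(∂)(x₀^{d-e}) = 0`. -/
theorem statement1 {n d e : ℕ} (F H : MvPolynomial (Fin (n + 1)) ℂ)
    (hFhom : F.IsHomogeneous d)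
    (hHhom : H.IsHomogeneous (d - e)) (hde : 1 ≤ d - e)
    (hdiv : ¬ (X 0 : MvPolynomial (Fin (n + 1)) ℂ) ∣ H)
    (hF : F = X 0 ^ e * H)
    (G : MvPolynomial (Fin (n + 1)) ℂ) (hGhom : G.IsHomogeneous (d - e))
    (hann : diffAct G ((X 0 : MvPolynomial (Fin (n + 1)) ℂ) ^ (d - e) * H) = 0) :
    diffAct G ((X 0 : MvPolynomial (Fin (n + 1)) ℂ) ^ (d - e)) = 0 := by
  set k := d - e with hk
  have hex : ∃ γ ∈ H.support, γ 0 = 0 := by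
    by_contra hcon
    push_neg at hcon
    apply hdiv
    have hdvd : X 0 ∣ ∑ v ∈ H.support, monomial v (coeff v H) :=
      Finset.dvd_sum fun γ hγ => X_dvd_monomial.mpr (Or.inr (hcon γ hγ))
    rwa [← H.as_sum] at hdvd
  obtain ⟨γ, hγ, hγ0⟩ := hex
  have hc : coeff (Finsupp.single 0 k) G = 0 := key H G hGhom γ hγ0 hγ hann
  rw [eq_zero_iff]
  intro γ'
  rw [coeff_diffAct, X_pow_eq_monomial]
  apply Finset.sum_eq_zero
  intro β hβ
  rw [coeff_monomial]
  by_cases hcase : Finsupp.single 0 k = γ' + β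
  swap
  · rw [if_neg hcase, mul_zero, mul_zero]
  · have hz : ∀ i : Fin (n+1), i ≠ 0 → β i = 0 := by
      intro i hi
      have := DFunLike.congr_fun hcase i
      simp only [Finsupp.single_apply, Finsupp.add_apply] at this
      rw [if_neg (fun hc => hi hc.symm)] at this
      omega
    have hβeq : β = Finsupp.single 0 k := eq_single_zero (support_degree hGhom hβ) hz
    rw [hβeq, hc, zero_mul]
end

section
/- Let f ∈ ℂ[x₁,…,xₙ] be a polynomial of degree at most d. Then dim_ℂ Diff(f) ≤ N_d, where N_d = 2·binom(n+k, k) if d = 2k+1 is odd and N_d = binom(n+k, k) + binom(n+k+1, k+1) if d = 2k+2 is even. -/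
open MvPolynomial

section AuxLemmas

variable {n : ℕ}

lemma totalDegree_pderiv_le' (i : Fin n) (p : MvPolynomial (Fin n) ℂ) :
    (pderiv i p).totalDegree ≤ p.totalDegree - 1 := by
  classical
  conv_lhs => rw [p.as_sum]
  rw [map_sum]
  refine (totalDegree_finset_sum _ _).trans (Finset.sup_le fun s hs => ?_)
  rw [pderiv_monomial]
  by_cases h : s i = 0
  · rw [h, Nat.cast_zero, mul_zero, monomial_zero, totalDegree_zero]
    exact Nat.zero_le _
  · refine (totalDegree_monomial_le _ _).trans ?_
    have hle : Finsupp.single i 1 ≤ s := by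
      rw [Finsupp.single_le_iff]; omega
    have hsum : ((s - Finsupp.single i 1).sum fun _ e => e) + 1 = s.sum fun _ e => e := by
      have h2 : (s - Finsupp.single i 1) + Finsupp.single i 1 = s :=
        tsub_add_cancel_of_le hle
      calc ((s - Finsupp.single i 1).sum fun _ e => e) + 1
          = ((s - Finsupp.single i 1).sum fun _ e => e) +
              ((Finsupp.single i 1).sum fun _ e => e) := by
            rw [Finsupp.sum_single_index]; rfl
        _ = (((s - Finsupp.single i 1) + Finsupp.single i 1).sum fun _ e => e) := by
            rw [Finsupp.sum_add_index'] <;> intros <;> rfl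
        _ = s.sum fun _ e => e := by rw [h2]
    have := le_totalDegree hs
    simp only [Function.id_def] at *
    omega

lemma totalDegree_pderiv_pow_le (i : Fin n) (e : ℕ) (p : MvPolynomial (Fin n) ℂ) :
    ((((pderiv (R := ℂ) i).toLinearMap) ^ e) p).totalDegree ≤ p.totalDegree - e := by
  induction e generalizing p with
  | zero => simp
  | succ e ih =>
    rw [pow_succ]
    calc ((((pderiv (R := ℂ) i).toLinearMap) ^ e * (pderiv (R := ℂ) i).toLinearMap) p).totalDegree
        = ((((pderiv (R := ℂ) i).toLinearMap) ^ e) (pderiv i p)).totalDegree := rfl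
      _ ≤ (pderiv i p).totalDegree - e := ih _
      _ ≤ (p.totalDegree - 1) - e := Nat.sub_le_sub_right (totalDegree_pderiv_le' i p) e
      _ = p.totalDegree - (e + 1) := by omega

lemma totalDegree_list_prod_le (l : List (Fin n)) (α : Fin n →₀ ℕ) (p : MvPolynomial (Fin n) ℂ) :
    (((l.map fun i => ((pderiv (R := ℂ) i).toLinearMap) ^ (α i)).prod) p).totalDegree ≤
      p.totalDegree - (l.map fun i => α i).sum := by
  induction l generalizing p with
  | nil => simp
  | cons i l ih =>
    rw [List.map_cons, List.prod_cons]
    calc ((((pderiv (R := ℂ) i).toLinearMap ^ (α i)) *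
            (l.map fun i => ((pderiv (R := ℂ) i).toLinearMap) ^ (α i)).prod) p).totalDegree
        = (((pderiv (R := ℂ) i).toLinearMap ^ (α i))
            (((l.map fun i => ((pderiv (R := ℂ) i).toLinearMap) ^ (α i)).prod) p)).totalDegree :=
          rfl
      _ ≤ (((l.map fun i => ((pderiv (R := ℂ) i).toLinearMap) ^ (α i)).prod) p).totalDegree
            - α i := totalDegree_pderiv_pow_le _ _ _
      _ ≤ (p.totalDegree - (l.map fun i => α i).sum) - α i :=
          Nat.sub_le_sub_right (ih p) _
      _ = p.totalDegree - ((l.map fun i => α i).sum + α i) := by omega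
      _ = p.totalDegree - ((i :: l).map fun i => α i).sum := by
          rw [List.map_cons, List.sum_cons]; ring_nf

end AuxLemmas


lemma finsupp_sum_eq_sum_univ {m : ℕ} (s : Fin m →₀ ℕ) :
    (s.sum fun _ e => e) = ∑ i, s i :=
  Finsupp.sum_fintype _ _ fun _ => rfl

lemma sum_cons_eq {m : ℕ} (y : ℕ) (s : Fin m →₀ ℕ) :
    ∑ i, (Finsupp.cons y s) i = y + ∑ i, s i := by
  rw [Fin.sum_univ_succ]
  simp [Finsupp.cons_zero, Finsupp.cons_succ]

lemma sum_tail_eq {m : ℕ} (t : Fin (m + 1) →₀ ℕ) :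
    ∑ i, t i = t 0 + ∑ i, (Finsupp.tail t) i := by
  rw [Fin.sum_univ_succ]
  simp [Finsupp.tail_apply]

/-- Monomials of degree `≤ j` in `n` variables correspond to multisets of size `j`
over `Fin (n+1)`. -/
noncomputable def boundedDegreeEquiv (n j : ℕ) :
    {s : Fin n →₀ ℕ // (s.sum fun _ e => e) ≤ j} ≃ Sym (Fin (n + 1)) j := by
  classical
  refine Equiv.trans (β := {t : Fin (n + 1) →₀ ℕ // (t.sum fun _ e => e) = j}) ?_ ?_
  · refine
      { toFun := fun s => ⟨Finsupp.cons (j - (s.1.sum fun _ e => e)) s.1, ?_⟩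
        invFun := fun t => ⟨Finsupp.tail t.1, ?_⟩
        left_inv := ?_
        right_inv := ?_ }
    · rw [finsupp_sum_eq_sum_univ, sum_cons_eq]
      rw [finsupp_sum_eq_sum_univ] at *
      have := s.2
      rw [finsupp_sum_eq_sum_univ] at this
      omega
    · have := t.2
      rw [finsupp_sum_eq_sum_univ, sum_tail_eq] at this
      rw [finsupp_sum_eq_sum_univ]
      omega
    · rintro ⟨s, hs⟩
      exact Subtype.ext (Finsupp.tail_cons _ _)
    · rintro ⟨t, ht⟩
      refine Subtype.ext ?_
      have h0 : j - ((Finsupp.tail t).sum fun _ e => e) = t 0 := by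
        rw [finsupp_sum_eq_sum_univ] at ht ⊢
        rw [sum_tail_eq] at ht
        omega
      simp only [h0]
      exact Finsupp.cons_tail t
  · refine
      { toFun := fun t => ⟨Finsupp.toMultiset t.1, ?_⟩
        invFun := fun s => ⟨Multiset.toFinsupp s.1, ?_⟩
        left_inv := ?_
        right_inv := ?_ }
    · rw [Finsupp.card_toMultiset]
      simpa [Function.id_def] using t.2
    · rw [show ((Multiset.toFinsupp s.1).sum fun _ e => e) =
          ((Multiset.toFinsupp s.1).sum fun _ => id) from rfl,
        Multiset.toFinsupp_sum_eq]
      exact s.2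
    · rintro ⟨t, ht⟩
      exact Subtype.ext (Finsupp.toMultiset_toFinsupp t)
    · rintro ⟨s, hs⟩
      exact Subtype.ext (Multiset.toFinsupp_toMultiset s)

noncomputable instance boundedFintype (n j : ℕ) :
    Fintype ↑{s : Fin n →₀ ℕ | (s.sum fun _ e => e) ≤ j} :=
  Fintype.ofEquiv _ (boundedDegreeEquiv n j).symm

lemma card_bounded (n j : ℕ) :
    Fintype.card ↑{s : Fin n →₀ ℕ | (s.sum fun _ e => e) ≤ j} = (n + j).choose j := by
  calc Fintype.card ↑{s : Fin n →₀ ℕ | (s.sum fun _ e => e) ≤ j}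
      = Nat.card ↑{s : Fin n →₀ ℕ | (s.sum fun _ e => e) ≤ j} :=
        Nat.card_eq_fintype_card.symm
    _ = Nat.card (Sym (Fin (n + 1)) j) := Nat.card_congr (boundedDegreeEquiv n j)
    _ = Fintype.card (Sym (Fin (n + 1)) j) := Nat.card_eq_fintype_card
    _ = (n + j).choose j := by
        rw [Sym.card_sym_eq_choose]
        congr 1
        simp

lemma finrank_restrictTotalDegree (n j : ℕ) :
    Module.finrank ℂ (restrictTotalDegree (Fin n) ℂ j) = (n + j).choose j := by
  have b : Module.Basis {s : Fin n →₀ ℕ | (s.sum fun _ e => e) ≤ j} ℂ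
      (restrictTotalDegree (Fin n) ℂ j) := basisRestrictSupport ℂ _
  rw [Module.finrank_eq_card_basis b]
  exact card_bounded n j

lemma diffAct_monomial {m : ℕ} (α : Fin m →₀ ℕ) :
    diffAct (monomial α (1 : ℂ)) = diffOpMonomial α := by
  have h := (basisMonomials (Fin m) ℂ).constr_basis ℂ diffOpMonomial α
  simpa only [coe_basisMonomials, diffAct] using h

lemma totalDegree_diffOpMonomial_le {n : ℕ} (α : Fin n →₀ ℕ) (p : MvPolynomial (Fin n) ℂ) :
    (diffOpMonomial α p).totalDegree ≤ p.totalDegree - (α.sum fun _ e => e) := by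
  have h := totalDegree_list_prod_le (List.finRange n) α p
  have h2 : ((List.finRange n).map fun i => α i).sum = α.sum fun _ e => e := by
    rw [finsupp_sum_eq_sum_univ, Fin.sum_univ_def]
  rw [h2] at h
  exact h

/-- For a polynomial `f ∈ ℂ[x₁,…,xₙ]` of degree at most `d ≥ 1`,
`dim_ℂ Diff(f) ≤ N_d`. -/
theorem statement4 {n d : ℕ} (hd : 1 ≤ d)
    (f : MvPolynomial (Fin n) ℂ) (hf : f.totalDegree ≤ d) :
    Module.finrank ℂ (DiffSpan f) ≤ Nd n d := by
  classical
  set k := (d - 1) / 2 with hk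
  set m := d - 1 - k with hm
  set M₁ : Submodule ℂ (MvPolynomial (Fin n) ℂ) :=
    (restrictTotalDegree (Fin n) ℂ k).map (diffAct.flip f) with hM₁
  set M₂ : Submodule ℂ (MvPolynomial (Fin n) ℂ) := restrictTotalDegree (Fin n) ℂ m with hM₂
  have key : DiffSpan f ≤ M₁ ⊔ M₂ := by
    rw [DiffSpan, Submodule.span_le]
    rintro _ ⟨α, rfl⟩
    by_cases h : (α.sum fun _ e => e) ≤ k
    · have hmem : monomial α (1 : ℂ) ∈ restrictTotalDegree (Fin n) ℂ k := by
        rw [mem_restrictTotalDegree]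
        exact (totalDegree_monomial_le _ _).trans h
      have hmem2 : diffAct.flip f (monomial α (1 : ℂ)) ∈ M₁ :=
        Submodule.mem_map_of_mem hmem
      rw [LinearMap.flip_apply, diffAct_monomial] at hmem2
      exact Submodule.mem_sup_left hmem2
    · refine Submodule.mem_sup_right ?_
      show diffOpMonomial α f ∈ restrictTotalDegree (Fin n) ℂ m
      rw [mem_restrictTotalDegree]
      have h1 := totalDegree_diffOpMonomial_le α f
      omega
  haveI : Module.Finite ℂ M₁ := Module.Finite.map _ _
  have h1 : Module.finrank ℂ M₁ ≤ (n + k).choose k :=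
    (Submodule.finrank_map_le _ _).trans_eq (finrank_restrictTotalDegree n k)
  have h2 : Module.finrank ℂ M₂ = (n + m).choose m := finrank_restrictTotalDegree n m
  have h3 : Module.finrank ℂ (DiffSpan f) ≤
      Module.finrank ℂ (M₁ ⊔ M₂ : Submodule ℂ (MvPolynomial (Fin n) ℂ)) :=
    Submodule.finrank_mono key
  have h4 : Module.finrank ℂ (M₁ ⊔ M₂ : Submodule ℂ (MvPolynomial (Fin n) ℂ)) ≤
      Module.finrank ℂ M₁ + Module.finrank ℂ M₂ :=
    Submodule.finrank_add_le_finrank_add_finrank M₁ M₂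
  have harith : (n + k).choose k + (n + m).choose m = Nd n d := by
    rcases Nat.even_or_odd d with ⟨c, hc⟩ | ⟨c, hc⟩
    · have h5 : ¬ d % 2 = 1 := by omega
      have h6 : d / 2 = c := by omega
      have h7 : k = c - 1 := by omega
      have h8 : m = c := by omega
      have h9 : n + c - 1 = n + (c - 1) := by omega
      rw [Nd, if_neg h5, h6, h7, h8, h9]
    · have h5 : d % 2 = 1 := by omega
      have h6 : d / 2 = c := by omega
      have h7 : k = c := by omega
      have h8 : m = c := by omega
      rw [Nd, if_pos h5, h6, h7, h8]
      ring
  omega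
end

section
/- Let I ⊆ ℂ[y₀,…,yₙ] be a saturated homogeneous ideal defining a zero-dimensional subscheme of length n + 1 that contains no nonzero linear form (I₁ = 0). Then I is generated by its quadratic part I₂, and dim_ℂ I₂ = binom(n+1, 2). -/
open MvPolynomial

section AssocFinite
variable {R : Type*} [CommRing R] {M : Type*} [AddCommGroup M] [Module R M]

theorem assocPrimes_subset_union (N : Submodule R M) :
    associatedPrimes R M ⊆ associatedPrimes R N ∪ associatedPrimes R (M ⧸ N) := by
  exact associatedPrimes.subset_union_of_exact N.injective_subtype (LinearMap.exact_subtype_mkQ N)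

theorem associatedPrimes_finite_of_noetherian [IsNoetherianRing R] [IsNoetherian R M] :
    (associatedPrimes R M).Finite := by
  by_contra hinf
  have hmax := (set_has_maximal_iff_noetherian.mpr (inferInstance : IsNoetherian R M))
    {N : Submodule R M | ¬ (associatedPrimes R (M ⧸ N)).Finite}
  have hbot : (⊥ : Submodule R M) ∈ {N : Submodule R M | ¬ (associatedPrimes R (M ⧸ N)).Finite} := by
    simp only [Set.mem_setOf_eq]
    intro hfin
    rw [LinearEquiv.AssociatedPrimes.eq (Submodule.quotEquivOfEqBot (⊥ : Submodule R M) rfl)] at hfin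
    exact hinf hfin
  obtain ⟨N, hN, hNmax⟩ := hmax ⟨⊥, hbot⟩
  simp only [Set.mem_setOf_eq] at hN
  have hne : (associatedPrimes R (M ⧸ N)).Nonempty := by
    rcases Set.eq_empty_or_nonempty (associatedPrimes R (M ⧸ N)) with h | h
    · exact absurd (h ▸ Set.finite_empty) hN
    · exact h
  obtain ⟨p, hp⟩ := hne
  obtain ⟨hpp, xbar, hx⟩ := isAssociatedPrime_iff.mp hp
  set N' : Submodule R M := Submodule.comap N.mkQ (Submodule.span R {xbar}) with hN'
  have hle : N ≤ N' := by
    intro y hy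
    simp only [hN', Submodule.mem_comap, Submodule.mkQ_apply]
    rw [Submodule.Quotient.mk_eq_zero N |>.mpr hy]
    exact Submodule.zero_mem _
  have hmap : Submodule.map N.mkQ N' = Submodule.span R {xbar} := by
    rw [hN', Submodule.map_comap_eq, Submodule.range_mkQ, top_inf_eq]
  have hxbar0 : xbar ≠ 0 := by
    rintro rfl
    rw [Submodule.colon_singleton_zero] at hx
    exact hpp.ne_top hx
  have hlt : N < N' := by
    refine lt_of_le_of_ne hle fun h => ?_
    apply hxbar0
    obtain ⟨x, rfl⟩ := Submodule.mkQ_surjective N xbar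
    have hxN' : x ∈ N' := by
      simp only [hN', Submodule.mem_comap, Submodule.mkQ_apply]
      exact Submodule.mem_span_singleton_self _
    rw [← h] at hxN'
    exact (Submodule.Quotient.mk_eq_zero N).mpr hxN'
  have hN'fin : (associatedPrimes R (M ⧸ N')).Finite := by
    by_contra h
    exact hNmax N' h hlt
  have hspan : (associatedPrimes R (Submodule.span R {xbar})).Finite := by
    have hker : LinearMap.ker (LinearMap.toSpanSingleton R (M ⧸ N) xbar) = p := by
      ext r
      rw [LinearMap.mem_ker, LinearMap.toSpanSingleton_apply, hx,
        Submodule.mem_colon_singleton, Submodule.mem_bot]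
    have e : (R ⧸ p) ≃ₗ[R] Submodule.span R {xbar} :=
      (Submodule.quotEquivOfEq _ _ hker.symm) ≪≫ₗ
        (LinearMap.toSpanSingleton R (M ⧸ N) xbar).quotKerEquivRange ≪≫ₗ
        (LinearEquiv.ofEq _ _ (LinearMap.span_singleton_eq_range R _ xbar).symm)
    rw [← LinearEquiv.AssociatedPrimes.eq e,
      associatedPrimes.eq_singleton_of_isPrimary hpp.isPrimary]
    exact Set.finite_singleton _
  have hquot : (associatedPrimes R ((M ⧸ N) ⧸ (Submodule.span R {xbar}))).Finite := by
    have e := Submodule.quotientQuotientEquivQuotient N N' hle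
    rw [hmap] at e
    rw [LinearEquiv.AssociatedPrimes.eq e]
    exact hN'fin
  exact hN (Set.Finite.subset (hspan.union hquot)
    (assocPrimes_subset_union (Submodule.span R {xbar})))

end AssocFinite


section Dim
variable (m e : ℕ)

noncomputable def degSetEquivSym : {d : Fin m →₀ ℕ // Finsupp.degree d = e} ≃ Sym (Fin m) e where
  toFun d := ⟨Finsupp.toMultiset d.1, by
    rw [Finsupp.card_toMultiset]
    simpa [Finsupp.degree_apply, Finsupp.sum] using d.2⟩
  invFun s := ⟨Multiset.toFinsupp s.1, by
    have := s.2
    simp only [Finsupp.degree, Finsupp.sum]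
    have h : Finsupp.toMultiset (Multiset.toFinsupp s.1) = s.1 := Multiset.toFinsupp_toMultiset _
    have h2 := Finsupp.card_toMultiset (Multiset.toFinsupp s.1)
    rw [h, s.2] at h2
    exact h2.symm⟩
  left_inv d := by
    ext
    simp
  right_inv s := by
    ext
    simp

noncomputable instance : Fintype {d : Fin m →₀ ℕ // Finsupp.degree d = e} :=
  Fintype.ofEquiv _ (degSetEquivSym m e).symm

theorem card_degSet : Fintype.card {d : Fin m →₀ ℕ // Finsupp.degree d = e} = (m + e - 1).choose e := by
  rw [Fintype.card_congr (degSetEquivSym m e), Sym.card_sym_eq_choose, Fintype.card_fin]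

theorem finrank_homog :
    Module.finrank ℂ (homogeneousSubmodule (Fin m) ℂ e) = (m + e - 1).choose e := by
  have h := homogeneousSubmodule_eq_finsupp_supported (Fin m) ℂ e
  have b : Module.Basis {d : Fin m →₀ ℕ // Finsupp.degree d = e} ℂ (homogeneousSubmodule (Fin m) ℂ e) := by
    rw [h]
    exact MvPolynomial.basisRestrictSupport ℂ {d | Finsupp.degree d = e}
  rw [Module.finrank_eq_card_basis b, card_degSet]

instance : FiniteDimensional ℂ (homogeneousSubmodule (Fin m) ℂ e) :=
  Submodule.finiteDimensional_of_le (S₂ := restrictTotalDegree (Fin m) ℂ e)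
    (fun p hp => (mem_restrictTotalDegree _ _ _).mpr
      (MvPolynomial.IsHomogeneous.totalDegree_le hp))

end Dim


namespace Stmt10Aux

variable {m : ℕ}

/-- Multiplication by a linear form as a map between homogeneous components. -/
noncomputable def mulHom (ℓ : MvPolynomial (Fin m) ℂ)
    (hℓ : ℓ ∈ homogeneousSubmodule (Fin m) ℂ 1) (e : ℕ) :
    homogeneousSubmodule (Fin m) ℂ e →ₗ[ℂ] homogeneousSubmodule (Fin m) ℂ (e + 1) where
  toFun x := ⟨ℓ * x.1, by
    have := (hℓ : MvPolynomial.IsHomogeneous ℓ 1).mul (x.2 : MvPolynomial.IsHomogeneous x.1 e)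
    rwa [add_comm] at this⟩
  map_add' x y := by ext; simp [mul_add]
  map_smul' c x := by ext; simp [Algebra.mul_smul_comm]

@[simp] lemma mulHom_apply (ℓ : MvPolynomial (Fin m) ℂ) (hℓ) (e : ℕ)
    (x : homogeneousSubmodule (Fin m) ℂ e) :
    ((mulHom ℓ hℓ e x : MvPolynomial (Fin m) ℂ)) = ℓ * x.1 := rfl

/-- The degree-`e` part of `I`, inside the homogeneous component. -/
noncomputable def homU (I : Ideal (MvPolynomial (Fin m) ℂ)) (e : ℕ) :
    Submodule ℂ (homogeneousSubmodule (Fin m) ℂ e) :=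
  Submodule.comap (homogeneousSubmodule (Fin m) ℂ e).subtype (Submodule.restrictScalars ℂ I)

/-- Quotient Hilbert function. -/
noncomputable def hq (I : Ideal (MvPolynomial (Fin m) ℂ)) (e : ℕ) : ℕ :=
  Module.finrank ℂ (homogeneousSubmodule (Fin m) ℂ e ⧸ homU I e)

end Stmt10Aux


namespace Stmt10Aux

instance (I : Ideal (MvPolynomial (Fin m) ℂ)) (e : ℕ) :
    FiniteDimensional ℂ (homogeneousSubmodule (Fin m) ℂ e ⧸ homU I e) := by
  infer_instance

lemma finrank_inf_eq_finrank_homU (I : Ideal (MvPolynomial (Fin m) ℂ)) (e : ℕ) :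
    Module.finrank ℂ
      (Submodule.restrictScalars ℂ I ⊓ homogeneousSubmodule (Fin m) ℂ e :
        Submodule ℂ (MvPolynomial (Fin m) ℂ)) = Module.finrank ℂ (homU I e) := by
  have h : homU I e = Submodule.comap (homogeneousSubmodule (Fin m) ℂ e).subtype
      (Submodule.restrictScalars ℂ I ⊓ homogeneousSubmodule (Fin m) ℂ e) := by
    ext x
    simp [homU, x.2]
  rw [h]
  exact (LinearEquiv.finrank_eq (Submodule.comapSubtypeEquivOfLe inf_le_right)).symm

lemma hilb_eq_hq (I : Ideal (MvPolynomial (Fin m) ℂ)) (e : ℕ) : hilb I e = hq I e := by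
  have h := Submodule.finrank_quotient_add_finrank (homU I e)
  rw [hilb, finrank_inf_eq_finrank_homU, hq]
  omega

/-- The quotient multiplication map. -/
noncomputable def mulQ (I : Ideal (MvPolynomial (Fin m) ℂ)) (ℓ : MvPolynomial (Fin m) ℂ)
    (hℓ : ℓ ∈ homogeneousSubmodule (Fin m) ℂ 1) (e : ℕ) :
    (homogeneousSubmodule (Fin m) ℂ e ⧸ homU I e) →ₗ[ℂ]
      (homogeneousSubmodule (Fin m) ℂ (e+1) ⧸ homU I (e+1)) :=
  Submodule.liftQ _ ((homU I (e+1)).mkQ ∘ₗ mulHom ℓ hℓ e) (by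
    intro x hx
    simp only [LinearMap.mem_ker, LinearMap.comp_apply, Submodule.mkQ_apply,
      Submodule.Quotient.mk_eq_zero]
    exact Ideal.mul_mem_left _ ℓ hx)

lemma mulQ_injective (I : Ideal (MvPolynomial (Fin m) ℂ)) (ℓ : MvPolynomial (Fin m) ℂ)
    (hℓ : ℓ ∈ homogeneousSubmodule (Fin m) ℂ 1)
    (hreg : ∀ x : MvPolynomial (Fin m) ℂ, ℓ * x ∈ I → x ∈ I) (e : ℕ) :
    Function.Injective (mulQ I ℓ hℓ e) := by
  rw [← LinearMap.ker_eq_bot]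
  apply Submodule.ker_liftQ_eq_bot
  intro x hx
  simp only [LinearMap.mem_ker, LinearMap.comp_apply, Submodule.mkQ_apply,
    Submodule.Quotient.mk_eq_zero] at hx
  exact hreg x.1 hx

lemma hq_mono (I : Ideal (MvPolynomial (Fin m) ℂ)) (ℓ : MvPolynomial (Fin m) ℂ)
    (hℓ : ℓ ∈ homogeneousSubmodule (Fin m) ℂ 1)
    (hreg : ∀ x : MvPolynomial (Fin m) ℂ, ℓ * x ∈ I → x ∈ I) :
    Monotone (hq I) := by
  apply monotone_nat_of_le_succ
  intro e
  exact LinearMap.finrank_le_finrank_of_injective (mulQ_injective I ℓ hℓ hreg e)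

end Stmt10Aux




namespace Stmt10Aux
open Classical in

theorem exists_regular {m : ℕ} (I : Ideal (MvPolynomial (Fin m) ℂ))
    (hsat : IsSaturatedIdeal I) :
    ∃ ℓ ∈ homogeneousSubmodule (Fin m) ℂ 1,
      ∀ x : MvPolynomial (Fin m) ℂ, ℓ * x ∈ I → x ∈ I := by
  set T := MvPolynomial (Fin m) ℂ
  set M := T ⧸ I
  have hfin : (associatedPrimes T M).Finite := associatedPrimes_finite_of_noetherian
  -- each associated prime meets the linear forms in a proper subspace
  set E := homogeneousSubmodule (Fin m) ℂ 1
  set S : Finset (Subspace ℂ E) :=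
    hfin.toFinset.image fun p => Submodule.comap E.subtype (Submodule.restrictScalars ℂ p)
    with hS
  have htop : ⊤ ∉ S := by
    rw [hS, Finset.mem_image]
    push_neg
    intro p hp hcomap
    rw [Set.Finite.mem_toFinset] at hp
    obtain ⟨hpp, xbar, hx⟩ := isAssociatedPrime_iff.mp hp
    have hxbar0 : xbar ≠ 0 := by
      rintro rfl
      rw [Submodule.colon_singleton_zero] at hx
      exact hpp.ne_top hx
    obtain ⟨x, rfl⟩ := Submodule.mkQ_surjective (Submodule.restrictScalars T I) xbar
    apply hxbar0
    have hXmem : ∀ i : Fin m, X i * x ∈ I := by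
      intro i
      have hXi : (X i : T) ∈ E := isHomogeneous_X ℂ i
      have : (⟨X i, hXi⟩ : E) ∈ (⊤ : Subspace ℂ E) := trivial
      rw [← hcomap] at this
      have hXp : (X i : T) ∈ p := this
      have := hx ▸ hXp
      have this := (Submodule.mem_bot T).mp (Submodule.mem_colon_singleton.mp this)
      have h2 : (Submodule.Quotient.mk (X i * x) : M) = 0 := by
        rw [show ((X i * x : T)) = (X i : T) • x from (smul_eq_mul _ _).symm,
          Submodule.Quotient.mk_smul]
        exact this
      rwa [Submodule.Quotient.mk_eq_zero] at h2
    have := hsat x hXmem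
    rw [Submodule.mkQ_apply]; refine (Submodule.Quotient.mk_eq_zero _).mpr ?_
    exact this
  have hcover := Subspace.biUnion_ne_univ_of_top_notMem htop
  have : ∃ v : E, ∀ W ∈ S, v ∉ W := by
    by_contra h
    push_neg at h
    apply hcover
    ext v
    simp only [Set.mem_iUnion, Set.mem_univ, iff_true]
    obtain ⟨W, hW, hv⟩ := h v
    exact ⟨W, hW, hv⟩
  obtain ⟨v, hv⟩ := this
  refine ⟨v.1, v.2, ?_⟩
  intro x hx
  by_contra hxI
  have hzd : (v.1 : T) ∈ {r : T | ∃ y : M, y ≠ 0 ∧ r • y = 0} := by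
    refine ⟨Submodule.Quotient.mk x, ?_, ?_⟩
    · rw [Ne, Submodule.Quotient.mk_eq_zero]
      exact hxI
    · rw [← Submodule.Quotient.mk_smul, smul_eq_mul]
      rw [Submodule.Quotient.mk_eq_zero]
      exact hx
  rw [← biUnion_associatedPrimes_eq_zero_divisors] at hzd
  simp only [Set.mem_iUnion] at hzd
  obtain ⟨p, hp, hvp⟩ := hzd
  refine hv (Submodule.comap E.subtype (Submodule.restrictScalars ℂ p)) ?_ hvp
  rw [hS, Finset.mem_image]
  exact ⟨p, hfin.mem_toFinset.mpr hp, rfl⟩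

end Stmt10Aux


namespace Stmt10Aux

lemma degree_add' {m : ℕ} (a b : Fin m →₀ ℕ) :
    Finsupp.degree (a + b) = Finsupp.degree a + Finsupp.degree b := by
  simp only [Finsupp.degree_eq_weight_one, map_add]

/-- Every homogeneous polynomial of degree `e+1` is a sum of `X i * (homogeneous of degree e)`. -/
theorem homog_succ_le {m : ℕ} (e : ℕ) :
    homogeneousSubmodule (Fin m) ℂ (e + 1) ≤
      ⨆ i : Fin m, Submodule.map (LinearMap.mulLeft ℂ (X i))
        (homogeneousSubmodule (Fin m) ℂ e) := by
  rw [homogeneousSubmodule_eq_finsupp_supported, AddMonoidAlgebra.supported_eq_span_single,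
    Submodule.span_le]
  rintro _ ⟨d, hd, rfl⟩
  simp only [Set.mem_setOf_eq] at hd
  have hd0 : d ≠ 0 := by
    intro h
    rw [h, map_zero] at hd
    omega
  obtain ⟨i, hi⟩ : ∃ i, d i ≠ 0 := by
    by_contra h
    push_neg at h
    exact hd0 (Finsupp.ext h)
  set d' : Fin m →₀ ℕ := d - Finsupp.single i 1 with hd'
  have hdd : d = Finsupp.single i 1 + d' := by
    ext j
    simp only [Finsupp.coe_add, Pi.add_apply, hd', Finsupp.coe_tsub, Pi.sub_apply]
    rcases eq_or_ne j i with rfl | hne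
    · simp only [Finsupp.single_eq_same]
      omega
    · simp [Finsupp.single_eq_of_ne hne]
  have hdeg' : Finsupp.degree d' = e := by
    have := degree_add' (Finsupp.single i 1) d'
    rw [← hdd, hd] at this
    have hs : Finsupp.degree (Finsupp.single i (1:ℕ)) = 1 := by
      rw [Finsupp.degree_apply, Finsupp.support_single_ne_zero _ one_ne_zero]
      simp
    omega
  have hmem : (monomial d' 1 : MvPolynomial (Fin m) ℂ) ∈ homogeneousSubmodule (Fin m) ℂ e :=
    isHomogeneous_monomial 1 hdeg'
  have : (AddMonoidAlgebra.single d (1:ℂ) : MvPolynomial (Fin m) ℂ)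
      = LinearMap.mulLeft ℂ (X i) (monomial d' 1) := by
    rw [single_eq_monomial, LinearMap.mulLeft_apply]
    rw [show (X i : MvPolynomial (Fin m) ℂ) = monomial (Finsupp.single i 1) 1 from rfl,
      monomial_mul, one_mul, ← hdd]
  show (AddMonoidAlgebra.single d (1:ℂ) : MvPolynomial (Fin m) ℂ) ∈ _
  rw [this]
  exact Submodule.mem_iSup_of_mem i ⟨monomial d' 1, hmem, rfl⟩

end Stmt10Aux

namespace Stmt10Aux

lemma eq_C_of_homog_zero {m : ℕ} (f : MvPolynomial (Fin m) ℂ)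
    (hf : f ∈ homogeneousSubmodule (Fin m) ℂ 0) : f = C (coeff 0 f) := by
  ext d
  rcases eq_or_ne d 0 with rfl | hd
  · simp
  · rw [coeff_C, if_neg (Ne.symm hd)]
    exact (hf : MvPolynomial.IsHomogeneous f 0).coeff_eq_zero
      (by rwa [Ne, Finsupp.degree_eq_zero_iff])

end Stmt10Aux

/-- A saturated homogeneous ideal defining a zero-dimensional subscheme
of length `n + 1` with no nonzero linear form is generated by its quadratic part `I₂`,
and `dim_ℂ I₂ = C(n+1, 2)`. -/
theorem statement10 {n : ℕ} (I : Ideal (MvPolynomial (Fin (n + 1)) ℂ))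
    (hlen : DefinesLength I (n + 1))
    (hlin : ∀ D ∈ I, D ∈ homogeneousSubmodule (Fin (n + 1)) ℂ 1 → D = 0) :
    I = Ideal.span {D : MvPolynomial (Fin (n + 1)) ℂ |
        D ∈ I ∧ D ∈ homogeneousSubmodule (Fin (n + 1)) ℂ 2} ∧
    Module.finrank ℂ
      (Submodule.restrictScalars ℂ I ⊓ homogeneousSubmodule (Fin (n + 1)) ℂ 2 :
        Submodule ℂ (MvPolynomial (Fin (n + 1)) ℂ)) = Nat.choose (n + 1) 2 := by
  obtain ⟨hhom, hsat, e₀, hstab⟩ := hlen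
  -- `1 ∉ I`
  have h1 : (1 : MvPolynomial (Fin (n + 1)) ℂ) ∉ I := by
    intro h
    have hI : I = ⊤ := (Ideal.eq_top_iff_one I).mpr h
    have hh := hstab e₀ le_rfl
    rw [hilb, hI] at hh
    rw [show Submodule.restrictScalars ℂ (⊤ : Ideal (MvPolynomial (Fin (n + 1)) ℂ)) = ⊤ from rfl,
      top_inf_eq] at hh
    omega
  -- regular linear form
  obtain ⟨ℓ, hℓ, hreg⟩ := Stmt10Aux.exists_regular I hsat
  -- Hilbert function facts
  have hU1 : Stmt10Aux.homU I 1 = ⊥ := by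
    rw [Submodule.eq_bot_iff]
    rintro ⟨x, hx⟩ hmem
    exact Subtype.ext (hlin x hmem hx)
  have hV1 : Module.finrank ℂ (homogeneousSubmodule (Fin (n + 1)) ℂ 1) = n + 1 := by
    rw [finrank_homog, show n + 1 + 1 - 1 = n + 1 from by omega, Nat.choose_one_right]
  have hV2 : Module.finrank ℂ (homogeneousSubmodule (Fin (n + 1)) ℂ 2) = (n + 2).choose 2 := by
    rw [finrank_homog, show n + 1 + 2 - 1 = n + 2 from by omega]
  have hq1 : Stmt10Aux.hq I 1 = n + 1 := by
    have h := Submodule.finrank_quotient_add_finrank (Stmt10Aux.homU I 1)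
    have h2 : Module.finrank ℂ (Stmt10Aux.homU I 1) = 0 := by
      rw [hU1]
      exact finrank_bot ℂ _
    rw [hV1] at h
    rw [Stmt10Aux.hq]
    omega
  have hqstab : ∀ e, e₀ ≤ e → Stmt10Aux.hq I e = n + 1 := fun e he =>
    (Stmt10Aux.hilb_eq_hq I e) ▸ hstab e he
  have hmono := Stmt10Aux.hq_mono I ℓ hℓ hreg
  have hqall : ∀ e, 1 ≤ e → Stmt10Aux.hq I e = n + 1 := by
    intro e he
    refine le_antisymm ?_ ?_
    · calc Stmt10Aux.hq I e ≤ Stmt10Aux.hq I (max e e₀) := hmono (le_max_left _ _)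
        _ = n + 1 := hqstab _ (le_max_right _ _)
    · exact le_trans (le_of_eq hq1.symm) (hmono he)
  -- dimension of the quadratic part
  have hU2rank : Module.finrank ℂ (Stmt10Aux.homU I 2) = (n + 1).choose 2 := by
    have h := Submodule.finrank_quotient_add_finrank (Stmt10Aux.homU I 2)
    have h2 : Stmt10Aux.hq I 2 = n + 1 := hqall 2 (by omega)
    have hpascal : (n + 2).choose 2 = (n + 1).choose 1 + (n + 1).choose 2 :=
      Nat.choose_succ_succ (n + 1) 1
    have hch : (n + 1).choose 1 = n + 1 := Nat.choose_one_right _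
    rw [hV2] at h
    rw [Stmt10Aux.hq] at h2
    omega
  -- surjectivity of multiplication in degree 1 → 2
  have hinj := Stmt10Aux.mulQ_injective I ℓ hℓ hreg 1
  have hsurj : Function.Surjective (Stmt10Aux.mulQ I ℓ hℓ 1) := by
    rw [← LinearMap.range_eq_top]
    apply Submodule.eq_top_of_finrank_eq
    rw [LinearMap.finrank_range_of_inj hinj]
    show Stmt10Aux.hq I 1 = Stmt10Aux.hq I 2
    rw [hq1, hqall 2 (by omega)]
  set J := Ideal.span {D : MvPolynomial (Fin (n + 1)) ℂ |
      D ∈ I ∧ D ∈ homogeneousSubmodule (Fin (n + 1)) ℂ 2} with hJ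
  have hJI : J ≤ I := Ideal.span_le.mpr fun D hD => hD.1
  -- base decomposition in degree 2
  have hbase : homogeneousSubmodule (Fin (n + 1)) ℂ 2 ≤
      Submodule.restrictScalars ℂ J ⊔
        Submodule.map (LinearMap.mulLeft ℂ ℓ) (homogeneousSubmodule (Fin (n + 1)) ℂ 1) := by
    intro y hy
    obtain ⟨xq, hxq⟩ := hsurj (Submodule.Quotient.mk
      (⟨y, hy⟩ : homogeneousSubmodule (Fin (n + 1)) ℂ 2))
    obtain ⟨x, rfl⟩ := Submodule.Quotient.mk_surjective _ xq
    have hxq' : (Submodule.Quotient.mk (Stmt10Aux.mulHom ℓ hℓ 1 x) :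
        homogeneousSubmodule (Fin (n + 1)) ℂ 2 ⧸ Stmt10Aux.homU I 2) =
        Submodule.Quotient.mk ⟨y, hy⟩ := hxq
    rw [Submodule.Quotient.eq] at hxq'
    have hg : ℓ * x.1 - y ∈ I := hxq'
    refine Submodule.mem_sup.mpr ⟨y - ℓ * x.1, ?_, ℓ * x.1, ⟨x.1, x.2, rfl⟩, by ring⟩
    show y - ℓ * x.1 ∈ J
    apply Ideal.subset_span
    constructor
    · rw [show y - ℓ * x.1 = -(ℓ * x.1 - y) from by ring]
      exact Submodule.neg_mem _ hg
    · exact Submodule.sub_mem _ hy (Stmt10Aux.mulHom ℓ hℓ 1 x).2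
  -- decomposition in all degrees ≥ 2
  have hC : ∀ k : ℕ, homogeneousSubmodule (Fin (n + 1)) ℂ (k + 2) ≤
      Submodule.restrictScalars ℂ J ⊔
        Submodule.map (LinearMap.mulLeft ℂ ℓ) (homogeneousSubmodule (Fin (n + 1)) ℂ (k + 1)) := by
    intro k
    induction k with
    | zero => exact hbase
    | succ k ih =>
      refine le_trans (Stmt10Aux.homog_succ_le (k + 2)) (iSup_le fun i => ?_)
      rintro _ ⟨f, hf, rfl⟩
      obtain ⟨g, hg, h, hh, hfe⟩ := Submodule.mem_sup.mp (ih hf)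
      obtain ⟨h', hh', rfl⟩ := hh
      rw [LinearMap.mulLeft_apply] at hfe ⊢
      have hXf : X i * f = X i * g + ℓ * (X i * h') := by
        rw [← hfe]; ring
      rw [hXf]
      refine Submodule.add_mem _ ?_ ?_
      · exact Submodule.mem_sup_left (Ideal.mul_mem_left J _ hg)
      · refine Submodule.mem_sup_right ⟨X i * h', ?_, rfl⟩
        have hmul := (isHomogeneous_X ℂ i).mul
          (hh' : MvPolynomial.IsHomogeneous h' (k + 1))
        rwa [show 1 + (k + 1) = k + 2 from by omega] at hmul
  -- every homogeneous element of I lies in J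
  have hB : ∀ e : ℕ, ∀ f ∈ I, f ∈ homogeneousSubmodule (Fin (n + 1)) ℂ e → f ∈ J := by
    intro e
    induction e using Nat.strong_induction_on with
    | _ e ih =>
      match e with
      | 0 =>
        intro f hfI hf
        rcases eq_or_ne (coeff 0 f) 0 with h0 | h0
        · rw [Stmt10Aux.eq_C_of_homog_zero f hf, h0, map_zero]
          exact J.zero_mem
        · exfalso
          apply h1
          have hC1 : (C (coeff 0 f) : MvPolynomial (Fin (n + 1)) ℂ) ∈ I :=
            Stmt10Aux.eq_C_of_homog_zero f hf ▸ hfI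
          have hmul := Ideal.mul_mem_left I (C (coeff 0 f)⁻¹) hC1
          rwa [← map_mul, inv_mul_cancel₀ h0, map_one] at hmul
      | 1 =>
        intro f hfI hf
        rw [hlin f hfI hf]
        exact J.zero_mem
      | 2 =>
        intro f hfI hf
        exact Ideal.subset_span ⟨hfI, hf⟩
      | (k + 3) =>
        intro f hfI hf
        obtain ⟨g, hg, h, hh, hfe⟩ := Submodule.mem_sup.mp (hC (k + 1) hf)
        obtain ⟨h', hh', rfl⟩ := hh
        rw [LinearMap.mulLeft_apply] at hfe
        have hlh : ℓ * h' ∈ I := by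
          rw [show ℓ * h' = f - g from by rw [← hfe]; ring]
          exact Submodule.sub_mem _ hfI (hJI hg)
        have hh'J : h' ∈ J := ih (k + 2) (by omega) h' (hreg h' hlh) hh'
        rw [← hfe]
        exact Ideal.add_mem _ hg (Ideal.mul_mem_left _ _ hh'J)
  constructor
  · refine le_antisymm ?_ hJI
    intro f hf
    have hsum : ∑ j ∈ Finset.range (f.totalDegree + 1), homogeneousComponent j f ∈ J :=
      Submodule.sum_mem _ fun j _ => hB j _ (hhom f hf j)
        ((mem_homogeneousSubmodule j _).mpr (homogeneousComponent_isHomogeneous j f))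
    rwa [sum_homogeneousComponent] at hsum
  · rw [Stmt10Aux.finrank_inf_eq_finrank_homU]
    exact hU2rank
end

section
/- Let m ≥ 1, let G ∈ ℂ[x₁,…,x_m] be a homogeneous cubic form with first-order partial derivatives G_i = ∂G/∂x_i for i = 1,…,m, and let f = G + x₁x_{m+1} + ⋯ + x_m x_{2m} + x_{2m+1} ∈ ℂ[x₁,…,x_{2m+1}]. Then Diff(f) is the ℂ-linear span of the 2m+2 linearly independent polynomials f, G₁ + x_{m+1}, …, G_m + x_{2m}, x₁, …, x_m, 1; in particular dim_ℂ Diff(f) = 2m + 2. -/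
open MvPolynomial

/-- Embedding of the index of `x_i` (`i = 1,…,m`) into `Fin (2m+1)` (variables
`x₁,…,x_{2m+1}`, with `x_{j+1}` corresponding to index `j`). -/
def emb1 (m : ℕ) (i : Fin m) : Fin (2 * m + 1) := ⟨i.val, by have := i.isLt; omega⟩

/-- Embedding of the index of `x_{m+i}` (`i = 1,…,m`) into `Fin (2m+1)`. -/
def emb2 (m : ℕ) (i : Fin m) : Fin (2 * m + 1) := ⟨m + i.val, by have := i.isLt; omega⟩

/-- The index of the last variable `x_{2m+1}` in `Fin (2m+1)`. -/
def lastVar (m : ℕ) : Fin (2 * m + 1) := ⟨2 * m, by omega⟩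

/-- `f = G + x₁x_{m+1} + ⋯ + x_m x_{2m} + x_{2m+1} ∈ ℂ[x₁,…,x_{2m+1}]`. -/
noncomputable def fpoly (m : ℕ) (G : MvPolynomial (Fin m) ℂ) :
    MvPolynomial (Fin (2 * m + 1)) ℂ :=
  rename (emb1 m) G + (∑ i : Fin m, X (emb1 m i) * X (emb2 m i)) + X (lastVar m)

/-- The family of `2m + 2` polynomials `f, G₁ + x_{m+1}, …, G_m + x_{2m}, x₁, …, x_m, 1`. -/
noncomputable def fam (m : ℕ) (G : MvPolynomial (Fin m) ℂ) :
    Unit ⊕ Fin m ⊕ Fin m ⊕ Unit → MvPolynomial (Fin (2 * m + 1)) ℂ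
  | Sum.inl _ => fpoly m G
  | Sum.inr (Sum.inl i) => rename (emb1 m) (pderiv i G) + X (emb2 m i)
  | Sum.inr (Sum.inr (Sum.inl i)) => X (emb1 m i)
  | Sum.inr (Sum.inr (Sum.inr _)) => 1


section Aux

lemma degree_single_one {ι : Type*} (a : ι) : (Finsupp.single a (1:ℕ)).degree = 1 := by
  classical
  simp [Finsupp.degree_apply, Finsupp.support_single_ne_zero a one_ne_zero]

lemma degree_add' {ι : Type*} (a b : ι →₀ ℕ) : (a + b).degree = a.degree + b.degree := by
  have h : ∀ c : ι →₀ ℕ, c.degree = c.sum fun _ k => k := fun _ => rfl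
  rw [h, h, h]
  exact Finsupp.sum_add_index' (fun _ => rfl) (fun _ _ _ => rfl)

lemma degree_eq_one {ι : Type*} [DecidableEq ι] (d : ι →₀ ℕ) (h : d.degree = 1) :
    ∃ a, d = Finsupp.single a 1 := by
  have hne : d ≠ 0 := by rintro rfl; simp at h
  obtain ⟨a, ha⟩ : ∃ a, d a ≠ 0 := by
    by_contra hc; push_neg at hc; exact hne (Finsupp.ext fun x => hc x)
  have h1 : d a ≤ 1 := h ▸ Finsupp.le_degree a d
  have h2 : d a = 1 := by omega
  refine ⟨a, Finsupp.ext fun b => ?_⟩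
  by_cases hb : b = a
  · subst hb; simp [h2]
  · rw [Finsupp.single_apply, if_neg (Ne.symm hb)]
    by_contra hdb
    have hsub : ({a, b} : Finset ι) ⊆ d.support := by
      intro x hx; simp at hx; rcases hx with rfl | rfl <;> simp [Finsupp.mem_support_iff, ha, hdb]
    have hle := Finset.sum_le_sum_of_subset (f := fun i => d i) hsub
    rw [Finset.sum_pair (Ne.symm hb)] at hle
    have hd : ∑ x ∈ d.support, d x = 1 := h
    omega

lemma isHom_pderiv {σ : Type*} [DecidableEq σ] {p : MvPolynomial σ ℂ} {n : ℕ}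
    (hp : p.IsHomogeneous (n+1)) (i : σ) : (pderiv i p).IsHomogeneous n := by
  rw [← p.support_sum_monomial_coeff, map_sum]
  apply IsHomogeneous.sum
  intro d hd
  rw [pderiv_monomial]
  by_cases hdi : d i = 0
  · simp only [hdi, Nat.cast_zero, mul_zero, map_zero]
    exact isHomogeneous_zero _ _ _
  · apply isHomogeneous_monomial
    have hd3 : d.degree = n + 1 := by
      rw [Finsupp.degree_eq_weight_one]; exact hp (mem_support_iff.mp hd)
    have hle : Finsupp.single i 1 ≤ d := by
      rw [Finsupp.single_le_iff]; omega
    have hdec : d - Finsupp.single i 1 + Finsupp.single i 1 = d := tsub_add_cancel_of_le hle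
    have h2 := degree_add' (d - Finsupp.single i 1) (Finsupp.single i 1)
    rw [hdec, degree_single_one] at h2
    omega




-- list prod helper
lemma list_prod_map_of_eq_one {M ι : Type*} [Monoid M] (F : ι → M) (j : ι)
    (h1 : ∀ i, i ≠ j → F i = 1) :
    ∀ (l : List ι), l.Nodup → j ∈ l → (l.map F).prod = F j
  | [], _, hj => absurd hj List.not_mem_nil
  | a :: l, hnd, hj => by
    rw [List.map_cons, List.prod_cons]
    by_cases ha : a = j
    · subst ha
      have hone : ∀ x ∈ l.map F, x = 1 := by
        rintro x hx
        rw [List.mem_map] at hx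
        obtain ⟨i, hi, rfl⟩ := hx
        exact h1 i (fun h => (List.nodup_cons.1 hnd).1 (h ▸ hi))
      rw [List.prod_eq_one hone, mul_one]
    · rw [h1 a ha, one_mul]
      exact list_prod_map_of_eq_one F j h1 l (List.nodup_cons.1 hnd).2
        ((List.mem_cons.1 hj).resolve_left (fun h => ha h.symm))

lemma diffOpMonomial_zero {n : ℕ} : diffOpMonomial (0 : Fin n →₀ ℕ) = 1 := by
  unfold diffOpMonomial
  apply List.prod_eq_one
  intro x hx
  rw [List.mem_map] at hx
  obtain ⟨i, _, rfl⟩ := hx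
  simp

lemma diffOpMonomial_single {n : ℕ} (j : Fin n) :
    diffOpMonomial (Finsupp.single j 1) = (pderiv (R := ℂ) j).toLinearMap := by
  unfold diffOpMonomial
  rw [list_prod_map_of_eq_one _ j ?_ _ (List.nodup_finRange n) (List.mem_finRange j)]
  · simp
  · intro i hij
    simp [Finsupp.single_apply, Ne.symm hij]

lemma emb1_inj (m : ℕ) : Function.Injective (emb1 m) := by
  intro a b h
  have h2 : (emb1 m a).val = (emb1 m b).val := congrArg Fin.val h
  exact Fin.ext h2

lemma emb2_inj (m : ℕ) : Function.Injective (emb2 m) := by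
  intro a b h
  have := congrArg Fin.val h
  simp only [emb2] at this
  exact Fin.ext (by omega)

lemma emb1_ne_emb2 {m : ℕ} (i j : Fin m) : emb1 m i ≠ emb2 m j := by
  intro h; have := congrArg Fin.val h; simp only [emb1, emb2] at this; have := i.isLt; omega

lemma emb1_ne_last {m : ℕ} (i : Fin m) : emb1 m i ≠ lastVar m := by
  intro h; have := congrArg Fin.val h; simp only [emb1, lastVar] at this; have := i.isLt; omega

lemma emb2_ne_last {m : ℕ} (i : Fin m) : emb2 m i ≠ lastVar m := by
  intro h; have := congrArg Fin.val h; simp only [emb2, lastVar] at this; have := i.isLt; omega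

lemma fin_cases3 {m : ℕ} (j : Fin (2*m+1)) :
    (∃ i : Fin m, j = emb1 m i) ∨ (∃ i : Fin m, j = emb2 m i) ∨ j = lastVar m := by
  by_cases h1 : j.val < m
  · exact Or.inl ⟨⟨j.val, h1⟩, Fin.ext rfl⟩
  · by_cases h2 : j.val < 2*m
    · refine Or.inr (Or.inl ⟨⟨j.val - m, by omega⟩, Fin.ext ?_⟩)
      simp only [emb2]; omega
    · refine Or.inr (Or.inr (Fin.ext ?_))
      have := j.isLt; simp only [lastVar]; omega

lemma pderiv_rename_emb1_eq_zero {m : ℕ} (p : MvPolynomial (Fin m) ℂ) (j : Fin (2*m+1))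
    (hj : m ≤ j.val) : pderiv j (rename (emb1 m) p) = 0 := by
  apply pderiv_eq_zero_of_notMem_vars
  intro h
  obtain ⟨i, _, hk⟩ := mem_vars_rename _ _ h
  have := congrArg Fin.val hk
  simp only [emb1] at this
  have := i.isLt
  omega

variable {m : ℕ} (G : MvPolynomial (Fin m) ℂ)

lemma pderiv_fpoly_emb1 (i : Fin m) :
    pderiv (emb1 m i) (fpoly m G) = rename (emb1 m) (pderiv i G) + X (emb2 m i) := by
  unfold fpoly
  rw [map_add, map_add, pderiv_rename (emb1_inj m), map_sum,
    pderiv_X_of_ne (Ne.symm (emb1_ne_last i))]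
  have hsum : ∀ k : Fin m,
      pderiv (emb1 m i) (X (emb1 m k) * X (emb2 m k) : MvPolynomial (Fin (2*m+1)) ℂ)
        = if k = i then X (emb2 m i) else 0 := by
    intro k
    rw [pderiv_mul]
    by_cases h : k = i
    · subst h
      rw [pderiv_X_self, pderiv_X_of_ne (Ne.symm (emb1_ne_emb2 k k))]
      simp
    · rw [pderiv_X_of_ne (fun hh => h (emb1_inj m hh)),
        pderiv_X_of_ne (Ne.symm (emb1_ne_emb2 i k))]
      simp [h]
  rw [Finset.sum_congr rfl (fun k _ => hsum k), Finset.sum_ite_eq' Finset.univ i]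
  simp

lemma pderiv_fpoly_emb2 (i : Fin m) :
    pderiv (emb2 m i) (fpoly m G) = X (emb1 m i) := by
  unfold fpoly
  rw [map_add, map_add, pderiv_rename_emb1_eq_zero _ _ (Nat.le_add_right m i.val), map_sum,
    pderiv_X_of_ne (Ne.symm (emb2_ne_last i))]
  have hsum : ∀ k : Fin m,
      pderiv (emb2 m i) (X (emb1 m k) * X (emb2 m k) : MvPolynomial (Fin (2*m+1)) ℂ)
        = if k = i then X (emb1 m i) else 0 := by
    intro k
    rw [pderiv_mul, pderiv_X_of_ne (emb1_ne_emb2 k i)]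
    by_cases h : k = i
    · subst h
      rw [pderiv_X_self]
      simp
    · rw [pderiv_X_of_ne (fun hh => h (emb2_inj m hh))]
      simp [h]
  rw [Finset.sum_congr rfl (fun k _ => hsum k), Finset.sum_ite_eq' Finset.univ i]
  simp

lemma pderiv_fpoly_last :
    pderiv (lastVar m) (fpoly m G) = 1 := by
  unfold fpoly
  rw [map_add, map_add, pderiv_rename_emb1_eq_zero _ _ (by simp [lastVar]; omega), map_sum,
    pderiv_X_self]
  have hsum : ∀ k : Fin m,
      pderiv (lastVar m) (X (emb1 m k) * X (emb2 m k) : MvPolynomial (Fin (2*m+1)) ℂ) = 0 := by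
    intro k
    rw [pderiv_mul, pderiv_X_of_ne (emb1_ne_last k), pderiv_X_of_ne (emb2_ne_last k)]
    simp
  rw [Finset.sum_congr rfl (fun k _ => hsum k)]
  simp


section Span

local notation "S" => Submodule.span ℂ (Set.range (fam m G))

lemma lin_mem (p : MvPolynomial (Fin m) ℂ) (hp : p.IsHomogeneous 1) :
    rename (emb1 m) p ∈ S := by
  rw [← p.support_sum_monomial_coeff, map_sum]
  apply Submodule.sum_mem
  intro d hd
  have hd1 : d.degree = 1 := by
    rw [Finsupp.degree_eq_weight_one]; exact hp (mem_support_iff.mp hd)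
  obtain ⟨a, rfl⟩ := degree_eq_one d hd1
  rw [rename_monomial, Finsupp.mapDomain_single]
  have hmono : (monomial (Finsupp.single (emb1 m a) 1)
      (coeff (Finsupp.single a 1) p) : MvPolynomial (Fin (2*m+1)) ℂ)
      = coeff (Finsupp.single a 1) p • X (emb1 m a) := by
    rw [smul_eq_C_mul, X, C_mul_monomial, mul_one]
  rw [hmono]
  exact Submodule.smul_mem _ _ (Submodule.subset_span ⟨Sum.inr (Sum.inr (Sum.inl a)), rfl⟩)

lemma one_mem_S : (1 : MvPolynomial (Fin (2*m+1)) ℂ) ∈ S :=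
  Submodule.subset_span ⟨Sum.inr (Sum.inr (Sum.inr ())), rfl⟩

lemma pderiv_fam_mem (hG : G.IsHomogeneous 3) (j : Fin (2*m+1)) (k : Unit ⊕ Fin m ⊕ Fin m ⊕ Unit) :
    pderiv j (fam m G k) ∈ S := by
  match k with
  | Sum.inl _ =>
    show pderiv j (fpoly m G) ∈ S
    rcases fin_cases3 j with ⟨i, rfl⟩ | ⟨i, rfl⟩ | rfl
    · rw [pderiv_fpoly_emb1]
      exact Submodule.subset_span ⟨Sum.inr (Sum.inl i), rfl⟩
    · rw [pderiv_fpoly_emb2]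
      exact Submodule.subset_span ⟨Sum.inr (Sum.inr (Sum.inl i)), rfl⟩
    · rw [pderiv_fpoly_last]
      exact one_mem_S G
  | Sum.inr (Sum.inl i) =>
    show pderiv j (rename (emb1 m) (pderiv i G) + X (emb2 m i)) ∈ S
    rw [map_add]
    rcases fin_cases3 j with ⟨k, rfl⟩ | ⟨k, rfl⟩ | rfl
    · rw [pderiv_rename (emb1_inj m), pderiv_X_of_ne (Ne.symm (emb1_ne_emb2 k i))]
      rw [add_zero]
      exact lin_mem G _ (isHom_pderiv (isHom_pderiv hG i) k)
    · rw [pderiv_rename_emb1_eq_zero _ _ (Nat.le_add_right m k.val), zero_add]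
      by_cases h : emb2 m i = emb2 m k
      · rw [h, pderiv_X_self]
        exact one_mem_S G
      · rw [pderiv_X_of_ne h]
        exact Submodule.zero_mem _
    · rw [pderiv_rename_emb1_eq_zero _ _ (by simp [lastVar]; omega), zero_add,
        pderiv_X_of_ne (emb2_ne_last i)]
      exact Submodule.zero_mem _
  | Sum.inr (Sum.inr (Sum.inl i)) =>
    show pderiv j (X (emb1 m i)) ∈ S
    by_cases h : emb1 m i = j
    · rw [h, pderiv_X_self]; exact one_mem_S G
    · rw [pderiv_X_of_ne h]; exact Submodule.zero_mem _
  | Sum.inr (Sum.inr (Sum.inr _)) =>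
    show pderiv j (1 : MvPolynomial (Fin (2*m+1)) ℂ) ∈ S
    rw [pderiv_one]
    exact Submodule.zero_mem _

lemma pderiv_S_mem (hG : G.IsHomogeneous 3) (j : Fin (2*m+1)) (v : MvPolynomial (Fin (2*m+1)) ℂ) (hv : v ∈ S) :
    pderiv j v ∈ S := by
  induction hv using Submodule.span_induction with
  | mem x h => obtain ⟨k, rfl⟩ := h; exact pderiv_fam_mem G hG j k
  | zero => rw [map_zero]; exact Submodule.zero_mem _
  | add x y hx hy ihx ihy => rw [map_add]; exact Submodule.add_mem _ ihx ihy
  | smul a x hx ih =>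
    rw [Derivation.map_smul]
    exact Submodule.smul_mem _ _ ih

end Span


lemma list_prod_pres {n : ℕ} (T : Submodule ℂ (MvPolynomial (Fin n) ℂ)) :
    ∀ (L : List (MvPolynomial (Fin n) ℂ →ₗ[ℂ] MvPolynomial (Fin n) ℂ)),
      (∀ D ∈ L, ∀ v ∈ T, D v ∈ T) → ∀ v ∈ T, L.prod v ∈ T
  | [], _, v, hv => by simpa using hv
  | D :: L, h, v, hv => by
    rw [List.prod_cons]
    have hL := list_prod_pres T L (fun D' hD' => h D' (List.mem_cons_of_mem _ hD')) v hv
    exact h D List.mem_cons_self _ hL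

lemma pow_pres {n : ℕ} (T : Submodule ℂ (MvPolynomial (Fin n) ℂ))
    (D : MvPolynomial (Fin n) ℂ →ₗ[ℂ] MvPolynomial (Fin n) ℂ)
    (hD : ∀ v ∈ T, D v ∈ T) :
    ∀ (k : ℕ), ∀ v ∈ T, (D ^ k) v ∈ T := by
  intro k
  induction k with
  | zero => intro v hv; simpa using hv
  | succ k ih =>
    intro v hv
    rw [pow_succ]
    exact ih _ (hD v hv)

lemma diffSpan_le (hG : G.IsHomogeneous 3) :
    DiffSpan (fpoly m G) ≤ Submodule.span ℂ (Set.range (fam m G)) := by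
  rw [DiffSpan, Submodule.span_le]
  rintro p ⟨α, rfl⟩
  simp only
  unfold diffOpMonomial
  refine list_prod_pres (Submodule.span ℂ (Set.range (fam m G))) _ ?_ _
    (Submodule.subset_span ⟨Sum.inl (), rfl⟩)
  intro D hD
  rw [List.mem_map] at hD
  obtain ⟨i, _, rfl⟩ := hD
  exact pow_pres _ _ (fun v hv => pderiv_S_mem G hG i v hv) _

lemma le_diffSpan : Submodule.span ℂ (Set.range (fam m G)) ≤ DiffSpan (fpoly m G) := by
  rw [Submodule.span_le]
  rintro p ⟨k, rfl⟩
  match k with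
  | Sum.inl _ =>
    refine Submodule.subset_span ⟨0, ?_⟩
    simp [diffOpMonomial_zero]
    rfl
  | Sum.inr (Sum.inl i) =>
    refine Submodule.subset_span ⟨Finsupp.single (emb1 m i) 1, ?_⟩
    simp only [diffOpMonomial_single]
    show pderiv (emb1 m i) (fpoly m G) = _
    rw [pderiv_fpoly_emb1]
    rfl
  | Sum.inr (Sum.inr (Sum.inl i)) =>
    refine Submodule.subset_span ⟨Finsupp.single (emb2 m i) 1, ?_⟩
    simp only [diffOpMonomial_single]
    show pderiv (emb2 m i) (fpoly m G) = _
    rw [pderiv_fpoly_emb2]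
    rfl
  | Sum.inr (Sum.inr (Sum.inr _)) =>
    refine Submodule.subset_span ⟨Finsupp.single (lastVar m) 1, ?_⟩
    simp only [diffOpMonomial_single]
    show pderiv (lastVar m) (fpoly m G) = _
    rw [pderiv_fpoly_last]
    rfl

lemma coeff_X_single {n : ℕ} (j k : Fin n) :
    coeff (Finsupp.single k 1) (X j : MvPolynomial (Fin n) ℂ) = if j = k then 1 else 0 := by
  rw [coeff_X']
  by_cases h : j = k
  · subst h; simp
  · rw [if_neg h, if_neg]
    intro hc
    exact h ((Finsupp.single_left_inj one_ne_zero).1 hc)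

section Indep
variable (hG : G.IsHomogeneous 3)

lemma hQ_hom : (∑ i : Fin m, X (emb1 m i) * X (emb2 m i) :
    MvPolynomial (Fin (2*m+1)) ℂ).IsHomogeneous 2 := by
  apply IsHomogeneous.sum
  intro i _
  simpa using (isHomogeneous_X ℂ (emb1 m i)).mul (isHomogeneous_X ℂ (emb2 m i))

lemma coeff_fam_last (hG : G.IsHomogeneous 3) (k : Unit ⊕ Fin m ⊕ Fin m ⊕ Unit) :
    coeff (Finsupp.single (lastVar m) 1) (fam m G k)
      = if k = Sum.inl () then 1 else 0 := by
  have hdeg : (Finsupp.single (lastVar m) (1:ℕ)).degree = 1 := degree_single_one _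
  match k with
  | Sum.inl _ =>
    show coeff _ (fpoly m G) = _
    unfold fpoly
    rw [coeff_add, coeff_add,
      (hG.rename_isHomogeneous).coeff_eq_zero (by rw [hdeg]; omega),
      (hQ_hom (m:=m)).coeff_eq_zero (by rw [hdeg]; omega), coeff_X_single]
    simp
  | Sum.inr (Sum.inl i) =>
    show coeff _ (rename (emb1 m) (pderiv i G) + X (emb2 m i)) = _
    rw [coeff_add,
      ((isHom_pderiv hG i).rename_isHomogeneous).coeff_eq_zero (by rw [hdeg]; omega),
      coeff_X_single, if_neg (emb2_ne_last i)]
    simp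
  | Sum.inr (Sum.inr (Sum.inl i)) =>
    show coeff _ (X (emb1 m i)) = _
    rw [coeff_X_single, if_neg (emb1_ne_last i)]
    simp
  | Sum.inr (Sum.inr (Sum.inr _)) =>
    show coeff _ (1 : MvPolynomial (Fin (2*m+1)) ℂ) = _
    rw [coeff_one, if_neg (Ne.symm (fun h => one_ne_zero (Finsupp.single_eq_zero.mp h)))]
    simp

lemma coeff_fam_emb2 (hG : G.IsHomogeneous 3) (j : Fin m) (k : Unit ⊕ Fin m ⊕ Fin m ⊕ Unit) :
    coeff (Finsupp.single (emb2 m j) 1) (fam m G k)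
      = if k = Sum.inr (Sum.inl j) then 1 else 0 := by
  have hdeg : (Finsupp.single (emb2 m j) (1:ℕ)).degree = 1 := degree_single_one _
  match k with
  | Sum.inl _ =>
    show coeff _ (fpoly m G) = _
    unfold fpoly
    rw [coeff_add, coeff_add,
      (hG.rename_isHomogeneous).coeff_eq_zero (by rw [hdeg]; omega),
      (hQ_hom (m:=m)).coeff_eq_zero (by rw [hdeg]; omega), coeff_X_single,
      if_neg (Ne.symm (emb2_ne_last j))]
    simp
  | Sum.inr (Sum.inl i) =>
    show coeff _ (rename (emb1 m) (pderiv i G) + X (emb2 m i)) = _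
    rw [coeff_add,
      ((isHom_pderiv hG i).rename_isHomogeneous).coeff_eq_zero (by rw [hdeg]; omega),
      coeff_X_single]
    by_cases h : i = j
    · subst h; simp
    · rw [if_neg (fun hh => h (emb2_inj m hh))]
      simp [h]
  | Sum.inr (Sum.inr (Sum.inl i)) =>
    show coeff _ (X (emb1 m i)) = _
    rw [coeff_X_single, if_neg (emb1_ne_emb2 i j)]
    simp
  | Sum.inr (Sum.inr (Sum.inr _)) =>
    show coeff _ (1 : MvPolynomial (Fin (2*m+1)) ℂ) = _
    rw [coeff_one, if_neg (Ne.symm (fun h => one_ne_zero (Finsupp.single_eq_zero.mp h)))]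
    simp

lemma coeff_fam_emb1 (hG : G.IsHomogeneous 3) (j : Fin m) (k : Unit ⊕ Fin m ⊕ Fin m ⊕ Unit) :
    coeff (Finsupp.single (emb1 m j) 1) (fam m G k)
      = if k = Sum.inr (Sum.inr (Sum.inl j)) then 1 else 0 := by
  have hdeg : (Finsupp.single (emb1 m j) (1:ℕ)).degree = 1 := degree_single_one _
  match k with
  | Sum.inl _ =>
    show coeff _ (fpoly m G) = _
    unfold fpoly
    rw [coeff_add, coeff_add,
      (hG.rename_isHomogeneous).coeff_eq_zero (by rw [hdeg]; omega),
      (hQ_hom (m:=m)).coeff_eq_zero (by rw [hdeg]; omega), coeff_X_single,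
      if_neg (Ne.symm (emb1_ne_last j))]
    simp
  | Sum.inr (Sum.inl i) =>
    show coeff _ (rename (emb1 m) (pderiv i G) + X (emb2 m i)) = _
    rw [coeff_add,
      ((isHom_pderiv hG i).rename_isHomogeneous).coeff_eq_zero (by rw [hdeg]; omega),
      coeff_X_single, if_neg (Ne.symm (emb1_ne_emb2 j i))]
    simp
  | Sum.inr (Sum.inr (Sum.inl i)) =>
    show coeff _ (X (emb1 m i)) = _
    rw [coeff_X_single]
    by_cases h : i = j
    · subst h; simp
    · rw [if_neg (fun hh => h (emb1_inj m hh))]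
      simp [h]
  | Sum.inr (Sum.inr (Sum.inr _)) =>
    show coeff _ (1 : MvPolynomial (Fin (2*m+1)) ℂ) = _
    rw [coeff_one, if_neg (Ne.symm (fun h => one_ne_zero (Finsupp.single_eq_zero.mp h)))]
    simp

lemma coeff_fam_zero (hG : G.IsHomogeneous 3) (k : Unit ⊕ Fin m ⊕ Fin m ⊕ Unit) :
    coeff (0 : Fin (2*m+1) →₀ ℕ) (fam m G k)
      = if k = Sum.inr (Sum.inr (Sum.inr ())) then 1 else 0 := by
  have hdeg : (0 : Fin (2*m+1) →₀ ℕ).degree = 0 := map_zero _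
  match k with
  | Sum.inl _ =>
    show coeff _ (fpoly m G) = _
    unfold fpoly
    rw [coeff_add, coeff_add,
      (hG.rename_isHomogeneous).coeff_eq_zero (by rw [hdeg]; omega),
      (hQ_hom (m:=m)).coeff_eq_zero (by rw [hdeg]; omega), MvPolynomial.coeff_zero_X]
    simp
  | Sum.inr (Sum.inl i) =>
    show coeff _ (rename (emb1 m) (pderiv i G) + X (emb2 m i)) = _
    rw [coeff_add,
      ((isHom_pderiv hG i).rename_isHomogeneous).coeff_eq_zero (by rw [hdeg]; omega),
      MvPolynomial.coeff_zero_X]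
    simp
  | Sum.inr (Sum.inr (Sum.inl i)) =>
    show coeff _ (X (emb1 m i)) = _
    rw [MvPolynomial.coeff_zero_X]
    simp
  | Sum.inr (Sum.inr (Sum.inr _)) =>
    show coeff _ (1 : MvPolynomial (Fin (2*m+1)) ℂ) = _
    simp

lemma fam_indep (hG : G.IsHomogeneous 3) : LinearIndependent ℂ (fam m G) := by
  rw [Fintype.linearIndependent_iff]
  intro g hg
  have hc : ∀ d : Fin (2*m+1) →₀ ℕ, ∑ i, g i * coeff d (fam m G i) = 0 := by
    intro d
    have h := congrArg (coeff d) hg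
    rw [coeff_sum] at h
    simpa [coeff_smul, smul_eq_mul] using h
  have key : ∀ k₀, g k₀ = 0 := by
    intro k₀
    match k₀ with
    | Sum.inl _ =>
      have h := hc (Finsupp.single (lastVar m) 1)
      simp only [coeff_fam_last G hG, mul_ite, mul_one, mul_zero,
        Finset.sum_ite_eq', Finset.mem_univ, if_true] at h
      exact h
    | Sum.inr (Sum.inl j) =>
      have h := hc (Finsupp.single (emb2 m j) 1)
      simp only [coeff_fam_emb2 G hG j, mul_ite, mul_one, mul_zero,
        Finset.sum_ite_eq', Finset.mem_univ, if_true] at h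
      exact h
    | Sum.inr (Sum.inr (Sum.inl j)) =>
      have h := hc (Finsupp.single (emb1 m j) 1)
      simp only [coeff_fam_emb1 G hG j, mul_ite, mul_one, mul_zero,
        Finset.sum_ite_eq', Finset.mem_univ, if_true] at h
      exact h
    | Sum.inr (Sum.inr (Sum.inr _)) =>
      have h := hc 0
      simp only [coeff_fam_zero G hG, mul_ite, mul_one, mul_zero,
        Finset.sum_ite_eq', Finset.mem_univ, if_true] at h
      exact h
  exact key

end Indep

end Aux

/-- For `f = G + x₁x_{m+1} + ⋯ + x_m x_{2m} + x_{2m+1}` with `G` a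
homogeneous cubic in `x₁,…,x_m`, `Diff(f)` is the span of the `2m+2` linearly
independent polynomials `f, G₁ + x_{m+1}, …, G_m + x_{2m}, x₁, …, x_m, 1`; in
particular `dim_ℂ Diff(f) = 2m + 2`. -/
theorem statement15 {m : ℕ} (hm : 1 ≤ m)
    (G : MvPolynomial (Fin m) ℂ) (hG : G.IsHomogeneous 3) :
    LinearIndependent ℂ (fam m G) ∧
    DiffSpan (fpoly m G) = Submodule.span ℂ (Set.range (fam m G)) ∧
    Module.finrank ℂ (DiffSpan (fpoly m G)) = 2 * m + 2 := by
  have hindep := fam_indep G hG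
  have heq : DiffSpan (fpoly m G) = Submodule.span ℂ (Set.range (fam m G)) :=
    le_antisymm (diffSpan_le G hG) (le_diffSpan G)
  refine ⟨hindep, heq, ?_⟩
  rw [heq, finrank_span_eq_card hindep]
  simp only [Fintype.card_sum, Fintype.card_unit, Fintype.card_fin]
  omega
end
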